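/- The second moment of the HRT-SOC estimator along the controlled chain equals the value function at the origin: Ẽ[(g(S_N) ∏ᵢ₌₁^N exp(-μᵢ(S_{i-1}) Λ_{Xᵢ}(Xᵢ))/(1-μᵢ(S_{i-1})))²] = C_{0,0}(μ₁,...,μ_N), and hence is at least u(0,0) ≥ α², for any admissible Markov controls μ₁,...,μ_N with values in (-∞,1). -/

import Mathlib

open MeasureTheory Real Set
open ENNReal

/-- Partial sum `s + Σ_{k < j} t k` (the state `S` before consuming component `j`). -/
noncomputable def partialSum {M : ℕ} (s : ℝ) (t : Fin M → ℝ) (j : Fin M) : ℝ :=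
  s + ∑ k ∈ Finset.univ.filter (fun k : Fin M => (k : ℕ) < (j : ℕ)), t k

/-- The second-moment cost functional
`C_{n,s}(μ) = Ẽ[g(S_N)² ∏_{i>n} (f_{X_i}(X_i)/f̃_{X_i}(X_i; μ_i(S_{i-1})))² | S_n = s]`,
written as a Lebesgue integral over the remaining increments. -/
noncomputable def cost (N : ℕ) (f : Fin N → ℝ → ℝ) (ft : Fin N → ℝ → ℝ → ℝ)
    (g : ℝ → ℝ) (μ : Fin N → ℝ → ℝ) (n : ℕ) (s : ℝ) : ℝ :=
  ∫ t in {t : Fin (N - n) → ℝ | ∀ j, 0 < t j},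
    (g (s + ∑ j, t j))^2 *
      ∏ j : Fin (N - n),
        (f ⟨n + j, by have := j.isLt; omega⟩ (t j))^2 /
          ft ⟨n + j, by have := j.isLt; omega⟩
            (μ ⟨n + j, by have := j.isLt; omega⟩ (partialSum s t j)) (t j)

/-- The value function `u(n,s)`: infimum of the cost over admissible Markov controls
with values in the parameter set `A`. -/
noncomputable def value (N : ℕ) (f : Fin N → ℝ → ℝ) (ft : Fin N → ℝ → ℝ → ℝ)
    (g : ℝ → ℝ) (A : Set ℝ) (n : ℕ) (s : ℝ) : ℝ :=
  ⨅ μ : {μ : Fin N → ℝ → ℝ // ∀ i, Measurable (μ i) ∧ ∀ x, μ i x ∈ A},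
    cost N f ft g μ.1 n s

/-- The hazard function `Λ(x) = -log(1 - F(x))`. -/
noncomputable def hazardFn (F : ℝ → ℝ) (x : ℝ) : ℝ := -Real.log (1 - F x)

/-- The hazard-rate-twisted density `f̃(x; μ) = (1-μ) f(x) exp(μ Λ(x))`. -/
noncomputable def hrtDensity (f F : ℝ → ℝ) (m x : ℝ) : ℝ :=
  (1 - m) * f x * Real.exp (m * hazardFn F x)

lemma hrt_integral_one (f F : ℝ → ℝ) (hf : ∀ x ∈ Ioi (0:ℝ), 0 ≤ f x)
    (hfpdf : ∫ x in Ioi (0:ℝ), f x = 1) (hFc : Continuous F) (hF0 : F 0 = 0)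
    (hFlt : ∀ x > (0:ℝ), F x < 1) (hderiv : ∀ x > (0:ℝ), HasDerivAt F (f x) x)
    {m : ℝ} (hm : m < 1) :
    IntegrableOn (fun x => hrtDensity f F m x) (Ioi 0) ∧
      ∫ x in Ioi (0:ℝ), hrtDensity f F m x = 1 := by
  have h1m : (0:ℝ) < 1 - m := by linarith
  have hfi : IntegrableOn f (Ioi 0) := by
    by_contra h
    rw [MeasureTheory.integral_undef h] at hfpdf; norm_num at hfpdf
  have hFtop : Filter.Tendsto F Filter.atTop (nhds 1) := by
    have h2 : Filter.Tendsto (fun x => ∫ y in (0:ℝ)..x, f y) Filter.atTop (nhds 1) := by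
      have := MeasureTheory.intervalIntegral_tendsto_integral_Ioi 0 hfi Filter.tendsto_id
      rwa [hfpdf] at this
    refine h2.congr' ?_
    filter_upwards [Filter.eventually_ge_atTop (0:ℝ)] with x hx
    have hint : IntervalIntegrable f volume 0 x := by
      rw [intervalIntegrable_iff_integrableOn_Ioc_of_le hx]
      exact hfi.mono_set Ioc_subset_Ioi_self
    have := intervalIntegral.integral_eq_sub_of_hasDerivAt_of_le hx
      hFc.continuousOn (fun y hy => hderiv y hy.1) hint
    rw [this, hF0, sub_zero]
  have hFpos : ∀ x : ℝ, 0 ≤ x → 0 < 1 - F x := by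
    intro x hx
    rcases hx.eq_or_lt with rfl | hx
    · rw [hF0]; norm_num
    · have := hFlt x hx; linarith
  set G : ℝ → ℝ := fun x => 1 - (1 - F x) ^ (1 - m) with hG
  have hnn : ∀ x ∈ Ioi (0:ℝ), 0 ≤ hrtDensity f F m x := by
    intro x hx
    exact mul_nonneg (mul_nonneg h1m.le (hf x hx)) (Real.exp_pos _).le
  have hGderiv : ∀ x ∈ Ioi (0:ℝ), HasDerivAt G (hrtDensity f F m x) x := by
    intro x hx
    have hpos := hFpos x (le_of_lt hx)
    have hu : HasDerivAt (fun y => 1 - F y) (-f x) x := by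
      exact ((hasDerivAt_const x (1:ℝ)).sub (hderiv x hx)).congr_deriv (zero_sub _)
    have h2 : HasDerivAt (fun y => (1 - F y) ^ (1 - m))
        ((1 - m) * (1 - F x) ^ (1 - m - 1) * (-f x)) x := by
      have := (Real.hasDerivAt_rpow_const (x := 1 - F x) (p := 1 - m)
        (Or.inl (ne_of_gt hpos))).comp x hu
      exact this
    have h3 := (hasDerivAt_const x (1:ℝ)).sub h2
    refine h3.congr_deriv ?_
    have hexp : Real.exp (m * hazardFn F x) = (1 - F x) ^ (-m) := by
      rw [hazardFn, Real.rpow_def_of_pos hpos]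
      congr 1; ring
    rw [hrtDensity, hexp, show (1:ℝ) - m - 1 = -m by ring]
    ring
  have hGcont : ContinuousWithinAt G (Ici 0) 0 := by
    apply ContinuousAt.continuousWithinAt
    apply ContinuousAt.sub continuousAt_const
    have h1 : ContinuousAt (fun y : ℝ => y ^ (1 - m)) (1 - F 0) :=
      Real.continuousAt_rpow_const _ _ (Or.inl (by rw [hF0]; norm_num))
    have h2 : ContinuousAt (fun x : ℝ => 1 - F x) 0 := continuousAt_const.sub hFc.continuousAt
    exact ContinuousAt.comp (g := fun y : ℝ => y ^ (1 - m)) (f := fun x : ℝ => 1 - F x) h1 h2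
  have hGtop : Filter.Tendsto G Filter.atTop (nhds 1) := by
    have h0 : Filter.Tendsto (fun x => 1 - F x) Filter.atTop (nhds 0) := by
      have := Filter.Tendsto.sub (tendsto_const_nhds (x := (1:ℝ))) hFtop
      simpa using this
    have h1 : Filter.Tendsto (fun x => (1 - F x) ^ (1 - m)) Filter.atTop (nhds 0) := by
      have hc : ContinuousAt (fun y : ℝ => y ^ (1 - m)) 0 :=
        Real.continuousAt_rpow_const _ _ (Or.inr h1m.le)
      have := hc.tendsto.comp h0
      simpa [Function.comp_def, Real.zero_rpow (ne_of_gt h1m)] using this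
    have := Filter.Tendsto.sub (tendsto_const_nhds (x := (1:ℝ))) h1
    simpa using this
  refine ⟨integrableOn_Ioi_deriv_of_nonneg hGcont hGderiv hnn hGtop, ?_⟩
  rw [integral_Ioi_of_hasDerivAt_of_nonneg hGcont hGderiv hnn hGtop]
  simp [hG, hF0]

lemma hrt_lintegral_one (f F : ℝ → ℝ) (hf : ∀ x ∈ Ioi (0:ℝ), 0 ≤ f x)
    (hfpdf : ∫ x in Ioi (0:ℝ), f x = 1) (hFc : Continuous F) (hF0 : F 0 = 0)
    (hFlt : ∀ x > (0:ℝ), F x < 1) (hderiv : ∀ x > (0:ℝ), HasDerivAt F (f x) x)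
    {m : ℝ} (hm : m < 1) :
    ∫⁻ x in Ioi (0:ℝ), ENNReal.ofReal (hrtDensity f F m x) = 1 := by
  obtain ⟨hint, hval⟩ := hrt_integral_one f F hf hfpdf hFc hF0 hFlt hderiv hm
  have hnn : (0:ℝ → ℝ) ≤ᵐ[volume.restrict (Ioi 0)] fun x => hrtDensity f F m x := by
    rw [Filter.EventuallyLE, ae_restrict_iff' measurableSet_Ioi]
    refine Filter.Eventually.of_forall fun x hx => ?_
    exact mul_nonneg (mul_nonneg (by linarith) (hf x hx)) (Real.exp_pos _).le
  rw [← MeasureTheory.ofReal_integral_eq_lintegral_ofReal hint hnn, hval, ENNReal.ofReal_one]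

lemma orthant_measurableSet (M : ℕ) : MeasurableSet {t : Fin M → ℝ | ∀ j, 0 < t j} := by
  have : {t : Fin M → ℝ | ∀ j, 0 < t j} = Set.pi univ (fun _ => Ioi 0) := by
    ext t; simp [Set.mem_pi]
  rw [this]; exact MeasurableSet.univ_pi fun _ => measurableSet_Ioi

lemma measurable_partialSum {M : ℕ} (s : ℝ) (j : Fin M) :
    Measurable (fun t : Fin M → ℝ => partialSum s t j) := by
  unfold partialSum
  exact measurable_const.add (Finset.measurable_sum _ fun k _ => measurable_pi_apply k)

lemma measurable_hrt_factor {M : ℕ} (f F ν : ℝ → ℝ) (hfm : Measurable f)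
    (hFc : Continuous F) (hν : Measurable ν) (s : ℝ) (j : Fin M) :
    Measurable (fun t : Fin M → ℝ => hrtDensity f F (ν (partialSum s t j)) (t j)) := by
  have hm : Measurable fun t : Fin M → ℝ => ν (partialSum s t j) :=
    hν.comp (measurable_partialSum s j)
  have hx : Measurable fun t : Fin M → ℝ => t j := measurable_pi_apply j
  have hhaz : Measurable fun t : Fin M → ℝ => hazardFn F (t j) := by
    unfold hazardFn
    exact (Real.measurable_log.comp (measurable_const.sub (hFc.measurable.comp hx))).neg
  unfold hrtDensity
  exact ((measurable_const.sub hm).mul (hfm.comp hx)).mul ((hm.mul hhaz).exp)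

lemma measurable_prod_hrt {M : ℕ} (f F ν : Fin M → ℝ → ℝ) (hfm : ∀ i, Measurable (f i))
    (hFc : ∀ i, Continuous (F i)) (hν : ∀ i, Measurable (ν i)) (s : ℝ) :
    Measurable (fun t : Fin M → ℝ =>
      ∏ j, hrtDensity (f j) (F j) (ν j (partialSum s t j)) (t j)) :=
  Finset.measurable_prod _ fun j _ => measurable_hrt_factor _ _ _ (hfm j) (hFc j) (hν j) s j

lemma partialSum_cons_zero {n : ℕ} (s x : ℝ) (y : Fin n → ℝ) :
    partialSum s (Fin.cons x y) 0 = s := by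
  simp [partialSum]

lemma partialSum_cons_succ {n : ℕ} (s x : ℝ) (y : Fin n → ℝ) (j : Fin n) :
    partialSum s (Fin.cons x y) j.succ = partialSum (s + x) y j := by
  unfold partialSum
  have : (Finset.univ.filter (fun k : Fin (n+1) => (k:ℕ) < (j.succ : ℕ))).sum (Fin.cons x y)
      = x + (Finset.univ.filter (fun k : Fin n => (k:ℕ) < (j:ℕ))).sum y := by
    rw [Finset.sum_filter, Fin.sum_univ_succ, Finset.sum_filter]
    simp [Fin.cons_succ, Fin.val_succ, Nat.succ_lt_succ_iff]
  rw [this]; ring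

lemma prod_hrt_lintegral_one :
    ∀ (M : ℕ) (f F ν : Fin M → ℝ → ℝ),
      (∀ i, Measurable (f i)) → (∀ i, ∀ x ∈ Ioi (0:ℝ), 0 ≤ f i x) →
      (∀ i, ∫ x in Ioi (0:ℝ), f i x = 1) →
      (∀ i, Continuous (F i)) → (∀ i, F i 0 = 0) →
      (∀ i, ∀ x > (0:ℝ), F i x < 1) →
      (∀ i, ∀ x > (0:ℝ), HasDerivAt (F i) (f i x) x) →
      (∀ i, Measurable (ν i)) → (∀ i, ∀ x, ν i x < 1) →
      ∀ s : ℝ,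
      ∫⁻ t in {t : Fin M → ℝ | ∀ j, 0 < t j},
        ENNReal.ofReal (∏ j, hrtDensity (f j) (F j) (ν j (partialSum s t j)) (t j)) = 1 := by
  intro M
  induction M with
  | zero =>
    intro f F ν _ _ _ _ _ _ _ _ s
    have hset : {t : Fin 0 → ℝ | ∀ j, 0 < t j} = univ := by
      ext t; simp only [mem_setOf_eq, mem_univ, iff_true]
      intro j; exact j.elim0
    rw [hset, Measure.restrict_univ]
    simp only [Finset.univ_eq_empty, Finset.prod_empty, ENNReal.ofReal_one]
    rw [lintegral_const, one_mul, volume_pi, Measure.pi_univ]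
    simp
  | succ n ih =>
    intro f F ν hfm hf hfpdf hFc hF0 hFlt hderiv hνm hνlt s
    set S : Set (Fin (n+1) → ℝ) := {t | ∀ j, 0 < t j} with hS
    set S' : Set (Fin n → ℝ) := {t | ∀ j, 0 < t j} with hS'
    set e := MeasurableEquiv.piFinSuccAbove (fun _ : Fin (n+1) => ℝ) 0 with he
    have mp : MeasurePreserving e.symm
        (volume : Measure (ℝ × (Fin n → ℝ))) (volume : Measure (Fin (n+1) → ℝ)) :=
      (volume_preserving_piFinSuccAbove (fun _ : Fin (n+1) => ℝ) 0).symm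
    set H : (Fin (n+1) → ℝ) → ℝ≥0∞ := fun t =>
      ENNReal.ofReal (∏ j, hrtDensity (f j) (F j) (ν j (partialSum s t j)) (t j)) with hH
    have Hm : Measurable H :=
      ENNReal.measurable_ofReal.comp (measurable_prod_hrt f F ν hfm hFc hνm s)
    have hcons : ∀ (x : ℝ) (y : Fin n → ℝ), e.symm (x, y) = Fin.cons x y := by
      intro x y
      rw [he, MeasurableEquiv.piFinSuccAbove_symm_apply]
      exact Fin.insertNth_zero' x y
    have hpre : e.symm ⁻¹' S = (Ioi (0:ℝ)) ×ˢ S' := by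
      ext p
      obtain ⟨x, y⟩ := p
      simp only [mem_preimage, mem_prod, mem_Ioi, hS, hS', mem_setOf_eq, hcons]
      constructor
      · intro h
        exact ⟨by simpa using h 0, fun j => by simpa using h j.succ⟩
      · intro h j
        refine Fin.cases ?_ (fun i => ?_) j
        · simpa using h.1
        · simpa using h.2 i
    have key1 : ∫⁻ t in S, H t = ∫⁻ p in (Ioi (0:ℝ)) ×ˢ S', H (e.symm p) := by
      rw [← hpre, mp.setLIntegral_comp_preimage_emb e.symm.measurableEmbedding]
    have key2 : ∫⁻ p in (Ioi (0:ℝ)) ×ˢ S', H (e.symm p)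
        = ∫⁻ x in Ioi (0:ℝ), ∫⁻ y in S', H (e.symm (x, y)) := by
      rw [MeasureTheory.Measure.volume_eq_prod, ← Measure.prod_restrict]
      exact lintegral_prod _ ((Hm.comp e.symm.measurable).aemeasurable)
    have hconsval : ∀ (x : ℝ) (y : Fin n → ℝ), H (e.symm (x, y)) =
        ENNReal.ofReal (hrtDensity (f 0) (F 0) (ν 0 s) x *
          ∏ j : Fin n, hrtDensity (f j.succ) (F j.succ)
            (ν j.succ (partialSum (s + x) y j)) (y j)) := by
      intro x y
      rw [hH, hcons]
      dsimp only
      congr 1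
      rw [Fin.prod_univ_succ]
      congr 1
      · rw [partialSum_cons_zero, Fin.cons_zero]
      · refine Finset.prod_congr rfl fun j _ => ?_
        rw [Fin.cons_succ, partialSum_cons_succ]
    have hx1 : ∀ x ∈ Ioi (0:ℝ),
        ∫⁻ y in S', H (e.symm (x, y))
          = ENNReal.ofReal (hrtDensity (f 0) (F 0) (ν 0 s) x) := by
      intro x hx
      have h0 : 0 ≤ hrtDensity (f 0) (F 0) (ν 0 s) x := by
        have h1 := hf 0 x hx
        have h2 := hνlt 0 s
        exact mul_nonneg (mul_nonneg (by linarith) h1) (Real.exp_pos _).le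
      have step : ∀ y : Fin n → ℝ, H (e.symm (x, y)) =
          ENNReal.ofReal (hrtDensity (f 0) (F 0) (ν 0 s) x) *
          ENNReal.ofReal (∏ j : Fin n, hrtDensity (f j.succ) (F j.succ)
            (ν j.succ (partialSum (s + x) y j)) (y j)) := by
        intro y
        rw [hconsval, ENNReal.ofReal_mul h0]
      calc ∫⁻ y in S', H (e.symm (x, y))
          = ∫⁻ y in S', ENNReal.ofReal (hrtDensity (f 0) (F 0) (ν 0 s) x) *
              ENNReal.ofReal (∏ j : Fin n, hrtDensity (f j.succ) (F j.succ)
                (ν j.succ (partialSum (s + x) y j)) (y j)) :=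
            lintegral_congr fun y => step y
        _ = ENNReal.ofReal (hrtDensity (f 0) (F 0) (ν 0 s) x) *
            ∫⁻ y in S', ENNReal.ofReal (∏ j : Fin n, hrtDensity (f j.succ) (F j.succ)
                (ν j.succ (partialSum (s + x) y j)) (y j)) :=
            lintegral_const_mul' _ _ ENNReal.ofReal_ne_top
        _ = ENNReal.ofReal (hrtDensity (f 0) (F 0) (ν 0 s) x) * 1 := by
            rw [ih (fun j => f j.succ) (fun j => F j.succ) (fun j => ν j.succ)
              (fun j => hfm j.succ) (fun j => hf j.succ) (fun j => hfpdf j.succ)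
              (fun j => hFc j.succ) (fun j => hF0 j.succ) (fun j => hFlt j.succ)
              (fun j => hderiv j.succ) (fun j => hνm j.succ) (fun j => hνlt j.succ) (s + x)]
        _ = ENNReal.ofReal (hrtDensity (f 0) (F 0) (ν 0 s) x) := mul_one _
    rw [key1, key2,
      setLIntegral_congr_fun measurableSet_Ioi hx1]
    exact hrt_lintegral_one (f 0) (F 0) (hf 0) (hfpdf 0) (hFc 0) (hF0 0) (hFlt 0)
      (hderiv 0) (hνlt 0 s)

/-- the second moment of the HRT-SOC estimator
`T = g(S_N) ∏ᵢ e^{-μᵢ(S_{i-1}) Λ_{Xᵢ}(Xᵢ)}/(1-μᵢ(S_{i-1}))` along the controlled chain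
equals the cost `C_{0,0}(μ₁,...,μ_N)`, is bounded below by the value `u(0,0)`, which in
turn is at least `α²`, for any admissible Markov controls with values in `(-∞,1)`. -/
theorem hrt_soc_second_moment (N : ℕ) (f : Fin N → ℝ → ℝ) (F : Fin N → ℝ → ℝ) (g : ℝ → ℝ)
    (μ : Fin N → ℝ → ℝ)
    (hg : ∀ x, 0 ≤ g x) (hgm : Measurable g)
    (hfm : ∀ i, Measurable (f i)) (hf : ∀ i, ∀ x ∈ Ioi (0:ℝ), 0 ≤ f i x)
    (hfpdf : ∀ i, ∫ x in Ioi (0:ℝ), f i x = 1)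
    (hFc : ∀ i, Continuous (F i)) (hF0 : ∀ i, F i 0 = 0)
    (hFlt : ∀ i, ∀ x > 0, F i x < 1)
    (hderiv : ∀ i, ∀ x > 0, HasDerivAt (F i) (f i x) x)
    (hadm : ∀ i, Measurable (μ i) ∧ ∀ x, μ i x ∈ Iio (1:ℝ))
    (hfin : ∀ ν : Fin N → ℝ → ℝ, (∀ i, Measurable (ν i) ∧ ∀ x, ν i x ∈ Iio (1:ℝ)) →
      ∀ n : ℕ, ∀ s : ℝ, IntegrableOn
        (fun t : Fin (N - n) → ℝ =>
          (g (s + ∑ j, t j))^2 *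
            ∏ j : Fin (N - n),
              (f ⟨n + j, by have := j.isLt; omega⟩ (t j))^2 /
                hrtDensity (f ⟨n + j, by have := j.isLt; omega⟩)
                  (F ⟨n + j, by have := j.isLt; omega⟩)
                  (ν ⟨n + j, by have := j.isLt; omega⟩ (partialSum s t j)) (t j))
        {t : Fin (N - n) → ℝ | ∀ j, 0 < t j})
    (α : ℝ)
    (hα : α = ∫ x in {x : Fin N → ℝ | ∀ j, 0 < x j}, g (∑ j, x j) * ∏ j, f j (x j)) :
    (∫ t in {t : Fin N → ℝ | ∀ j, 0 < t j},
        (g (∑ j, t j) *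
          ∏ j, Real.exp (-(μ j (partialSum 0 t j)) * hazardFn (F j) (t j))
                 / (1 - μ j (partialSum 0 t j)))^2 *
          ∏ j, hrtDensity (f j) (F j) (μ j (partialSum 0 t j)) (t j))
      = cost N f (fun i m x => hrtDensity (f i) (F i) m x) g μ 0 0
    ∧ value N f (fun i m x => hrtDensity (f i) (F i) m x) g (Iio 1) 0 0
        ≤ cost N f (fun i m x => hrtDensity (f i) (F i) m x) g μ 0 0
    ∧ α ^ 2 ≤ value N f (fun i m x => hrtDensity (f i) (F i) m x) g (Iio 1) 0 0 := by
  have hSmeas := orthant_measurableSet N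
  have hrtnn : ∀ (ν : Fin N → ℝ → ℝ), (∀ i x, ν i x < 1) → ∀ (t : Fin N → ℝ), (∀ j, 0 < t j) →
      ∀ j, 0 ≤ hrtDensity (f j) (F j) (ν j (partialSum 0 t j)) (t j) := by
    intro ν hν t ht j
    exact mul_nonneg (mul_nonneg (by linarith [hν j (partialSum 0 t j)])
      (hf j _ (ht j))) (Real.exp_pos _).le
  have hcost_eq : ∀ (ν : Fin N → ℝ → ℝ),
      cost N f (fun i m x => hrtDensity (f i) (F i) m x) g ν 0 0
        = ∫ t in {t : Fin N → ℝ | ∀ j, 0 < t j},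
            (g (∑ j, t j))^2 * ∏ j, (f j (t j))^2 /
              hrtDensity (f j) (F j) (ν j (partialSum 0 t j)) (t j) := by
    intro ν
    rw [cost]
    refine setIntegral_congr_fun hSmeas fun t _ => ?_
    simp only [Nat.zero_add, Fin.eta, zero_add]
    rfl
  have hcost_nn : ∀ (ν : Fin N → ℝ → ℝ), (∀ i x, ν i x < 1) →
      0 ≤ cost N f (fun i m x => hrtDensity (f i) (F i) m x) g ν 0 0 := by
    intro ν hν
    rw [hcost_eq ν]
    refine setIntegral_nonneg hSmeas fun t ht => ?_
    exact mul_nonneg (sq_nonneg _) (Finset.prod_nonneg fun j _ =>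
      div_nonneg (sq_nonneg _) (hrtnn ν hν t ht j))
  have hcintS : ∀ (ν : Fin N → ℝ → ℝ), (∀ i, Measurable (ν i) ∧ ∀ x, ν i x ∈ Iio 1) →
      IntegrableOn (fun t : Fin N → ℝ =>
        (g (∑ j, t j))^2 * ∏ j, (f j (t j))^2 /
          hrtDensity (f j) (F j) (ν j (partialSum 0 t j)) (t j))
        {t : Fin N → ℝ | ∀ j, 0 < t j} := by
    intro ν hν
    refine (hfin ν hν 0 0).congr_fun (fun t _ => ?_) hSmeas
    simp only [Nat.zero_add, Fin.eta, zero_add]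
    rfl
  have part1 : (∫ t in {t : Fin N → ℝ | ∀ j, 0 < t j},
        (g (∑ j, t j) *
          ∏ j, Real.exp (-(μ j (partialSum 0 t j)) * hazardFn (F j) (t j))
                 / (1 - μ j (partialSum 0 t j)))^2 *
          ∏ j, hrtDensity (f j) (F j) (μ j (partialSum 0 t j)) (t j))
      = cost N f (fun i m x => hrtDensity (f i) (F i) m x) g μ 0 0 := by
    rw [hcost_eq μ]
    refine setIntegral_congr_fun hSmeas fun t _ => ?_
    rw [mul_pow, ← Finset.prod_pow, mul_assoc, ← Finset.prod_mul_distrib]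
    congr 1
    refine Finset.prod_congr rfl fun j _ => ?_
    have hm : μ j (partialSum 0 t j) < 1 := mem_Iio.1 ((hadm j).2 _)
    have h1 : (1:ℝ) - μ j (partialSum 0 t j) ≠ 0 := ne_of_gt (by linarith)
    rcases eq_or_ne (f j (t j)) 0 with h | h
    · simp [hrtDensity, h]
    · have he : Real.exp (μ j (partialSum 0 t j) * hazardFn (F j) (t j)) ≠ 0 :=
        Real.exp_ne_zero _
      rw [hrtDensity, show -(μ j (partialSum 0 t j)) * hazardFn (F j) (t j)
          = -((μ j (partialSum 0 t j)) * hazardFn (F j) (t j)) by ring, Real.exp_neg]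
      field_simp
  have hbdd : BddBelow (Set.range fun ν :
      {ν : Fin N → ℝ → ℝ // ∀ i, Measurable (ν i) ∧ ∀ x, ν i x ∈ Iio 1} =>
      cost N f (fun i m x => hrtDensity (f i) (F i) m x) g ν.1 0 0) := by
    refine ⟨0, ?_⟩
    rintro _ ⟨ν, rfl⟩
    exact hcost_nn ν.1 fun i x => mem_Iio.1 ((ν.2 i).2 x)
  have part3 : ∀ (ν : Fin N → ℝ → ℝ), (∀ i, Measurable (ν i) ∧ ∀ x, ν i x ∈ Iio 1) →
      α ^ 2 ≤ cost N f (fun i m x => hrtDensity (f i) (F i) m x) g ν 0 0 := by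
    intro ν hν
    have hνm : ∀ i, Measurable (ν i) := fun i => (hν i).1
    have hνlt : ∀ i x, ν i x < 1 := fun i x => mem_Iio.1 ((hν i).2 x)
    have hcint := hcintS ν hν
    by_cases hint : IntegrableOn (fun t : Fin N → ℝ => g (∑ j, t j) * ∏ j, f j (t j))
        {t : Fin N → ℝ | ∀ j, 0 < t j}
    swap
    · rw [hα, MeasureTheory.integral_undef hint]
      simpa using hcost_nn ν hνlt
    have hα0 : 0 ≤ α := by
      rw [hα]
      exact setIntegral_nonneg hSmeas fun t ht =>
        mul_nonneg (hg _) (Finset.prod_nonneg fun j _ => hf j _ (ht j))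
    have hW := prod_hrt_lintegral_one N f F ν hfm hf hfpdf hFc hF0 hFlt hderiv hνm hνlt 0
    have hsum : Measurable fun t : Fin N → ℝ => ∑ j, t j :=
      Finset.measurable_sum _ fun j _ => measurable_pi_apply j
    have hcm : Measurable fun t : Fin N → ℝ => (g (∑ j, t j))^2 *
        ∏ j, (f j (t j))^2 / hrtDensity (f j) (F j) (ν j (partialSum 0 t j)) (t j) :=
      ((hgm.comp hsum).pow_const 2).mul (Finset.measurable_prod _ fun j _ =>
        (((hfm j).comp (measurable_pi_apply j)).pow_const 2).div
          (measurable_hrt_factor _ _ _ (hfm j) (hFc j) (hνm j) 0 j))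
    have hwm := measurable_prod_hrt f F ν hfm hFc hνm 0
    have hsq : ∀ a : ℝ≥0∞, (a ^ (2:ℕ)) ^ (1/2:ℝ) = a := fun a => by
      rw [← ENNReal.rpow_natCast a 2, ← ENNReal.rpow_mul]
      norm_num
    have hsq2 : ∀ a : ℝ≥0∞, (a ^ (1/2:ℝ)) ^ (2:ℝ) = a := fun a => by
      rw [← ENNReal.rpow_mul]
      norm_num
    have hpoint : ∀ t ∈ {t : Fin N → ℝ | ∀ j, 0 < t j},
        ENNReal.ofReal (g (∑ j, t j) * ∏ j, f j (t j))
          = ENNReal.ofReal ((g (∑ j, t j))^2 * ∏ j, (f j (t j))^2 /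
              hrtDensity (f j) (F j) (ν j (partialSum 0 t j)) (t j)) ^ (1/2:ℝ) *
            ENNReal.ofReal (∏ j, hrtDensity (f j) (F j) (ν j (partialSum 0 t j)) (t j))
              ^ (1/2:ℝ) := by
      intro t ht
      have hcnn : 0 ≤ (g (∑ j, t j))^2 * ∏ j, (f j (t j))^2 /
          hrtDensity (f j) (F j) (ν j (partialSum 0 t j)) (t j) :=
        mul_nonneg (sq_nonneg _) (Finset.prod_nonneg fun j _ =>
          div_nonneg (sq_nonneg _) (hrtnn ν hνlt t ht j))
      have hgp : 0 ≤ g (∑ j, t j) * ∏ j, f j (t j) :=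
        mul_nonneg (hg _) (Finset.prod_nonneg fun j _ => hf j _ (ht j))
      have hcw : ((g (∑ j, t j))^2 * ∏ j, (f j (t j))^2 /
            hrtDensity (f j) (F j) (ν j (partialSum 0 t j)) (t j)) *
          (∏ j, hrtDensity (f j) (F j) (ν j (partialSum 0 t j)) (t j))
          = (g (∑ j, t j) * ∏ j, f j (t j))^2 := by
        rw [mul_assoc, ← Finset.prod_mul_distrib, mul_pow, ← Finset.prod_pow]
        congr 1
        refine Finset.prod_congr rfl fun j _ => ?_
        rcases eq_or_ne (f j (t j)) 0 with h | h
        · simp [hrtDensity, h]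
        · have hm := hνlt j (partialSum 0 t j)
          have hh : hrtDensity (f j) (F j) (ν j (partialSum 0 t j)) (t j) ≠ 0 :=
            mul_ne_zero (mul_ne_zero (ne_of_gt (by linarith)) h) (Real.exp_ne_zero _)
          exact div_mul_cancel₀ _ hh
      rw [← ENNReal.mul_rpow_of_nonneg _ _ (by norm_num : (0:ℝ) ≤ 1/2),
        ← ENNReal.ofReal_mul hcnn, hcw, ENNReal.ofReal_pow hgp, hsq]
    have hholder := ENNReal.lintegral_mul_le_Lp_mul_Lq
      (μ := volume.restrict {t : Fin N → ℝ | ∀ j, 0 < t j})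
      (f := fun t : Fin N → ℝ => ENNReal.ofReal ((g (∑ j, t j))^2 * ∏ j, (f j (t j))^2 /
        hrtDensity (f j) (F j) (ν j (partialSum 0 t j)) (t j)) ^ (1/2:ℝ))
      (g := fun t : Fin N → ℝ => ENNReal.ofReal
        (∏ j, hrtDensity (f j) (F j) (ν j (partialSum 0 t j)) (t j)) ^ (1/2:ℝ))
      (Real.HolderConjugate.two_two : Real.HolderConjugate 2 2)
      (((ENNReal.continuous_rpow_const.measurable).comp
        (ENNReal.measurable_ofReal.comp hcm)).aemeasurable)
      (((ENNReal.continuous_rpow_const.measurable).comp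
        (ENNReal.measurable_ofReal.comp hwm)).aemeasurable)
    simp only [Pi.mul_apply, Function.comp_apply, hsq2] at hholder
    have hLeq : ENNReal.ofReal α = ∫⁻ t in {t : Fin N → ℝ | ∀ j, 0 < t j},
        ENNReal.ofReal (g (∑ j, t j) * ∏ j, f j (t j)) := by
      rw [hα]
      refine MeasureTheory.ofReal_integral_eq_lintegral_ofReal hint ?_
      rw [Filter.EventuallyLE, ae_restrict_iff' hSmeas]
      exact Filter.Eventually.of_forall fun t ht =>
        mul_nonneg (hg _) (Finset.prod_nonneg fun j _ => hf j _ (ht j))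
    have hCeq : ENNReal.ofReal (cost N f (fun i m x => hrtDensity (f i) (F i) m x) g ν 0 0)
        = ∫⁻ t in {t : Fin N → ℝ | ∀ j, 0 < t j},
            ENNReal.ofReal ((g (∑ j, t j))^2 * ∏ j, (f j (t j))^2 /
              hrtDensity (f j) (F j) (ν j (partialSum 0 t j)) (t j)) := by
      rw [hcost_eq ν]
      refine MeasureTheory.ofReal_integral_eq_lintegral_ofReal hcint ?_
      rw [Filter.EventuallyLE, ae_restrict_iff' hSmeas]
      refine Filter.Eventually.of_forall fun t ht => ?_
      exact mul_nonneg (sq_nonneg _) (Finset.prod_nonneg fun j _ =>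
        div_nonneg (sq_nonneg _) (hrtnn ν hνlt t ht j))
    have step1 : ENNReal.ofReal α ≤
        ENNReal.ofReal (cost N f (fun i m x => hrtDensity (f i) (F i) m x) g ν 0 0)
          ^ (1/2:ℝ) := by
      rw [hLeq, hCeq]
      calc ∫⁻ t in {t : Fin N → ℝ | ∀ j, 0 < t j},
            ENNReal.ofReal (g (∑ j, t j) * ∏ j, f j (t j))
          = ∫⁻ t in {t : Fin N → ℝ | ∀ j, 0 < t j},
              ENNReal.ofReal ((g (∑ j, t j))^2 * ∏ j, (f j (t j))^2 /
                hrtDensity (f j) (F j) (ν j (partialSum 0 t j)) (t j)) ^ (1/2:ℝ) *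
              ENNReal.ofReal (∏ j, hrtDensity (f j) (F j) (ν j (partialSum 0 t j)) (t j))
                ^ (1/2:ℝ) :=
            setLIntegral_congr_fun hSmeas hpoint
        _ ≤ (∫⁻ t in {t : Fin N → ℝ | ∀ j, 0 < t j},
              ENNReal.ofReal ((g (∑ j, t j))^2 * ∏ j, (f j (t j))^2 /
                hrtDensity (f j) (F j) (ν j (partialSum 0 t j)) (t j))) ^ (1/2:ℝ) *
            (∫⁻ t in {t : Fin N → ℝ | ∀ j, 0 < t j},
              ENNReal.ofReal (∏ j, hrtDensity (f j) (F j) (ν j (partialSum 0 t j)) (t j)))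
                ^ (1/2:ℝ) := hholder
        _ = _ := by rw [hW, ENNReal.one_rpow, mul_one]
    have step2 := ENNReal.rpow_le_rpow step1 (by norm_num : (0:ℝ) ≤ 2)
    rw [← ENNReal.rpow_mul, show (1/2:ℝ)*2 = 1 by norm_num, ENNReal.rpow_one] at step2
    have step3 : ENNReal.ofReal (α^2) ≤
        ENNReal.ofReal (cost N f (fun i m x => hrtDensity (f i) (F i) m x) g ν 0 0) := by
      calc ENNReal.ofReal (α^2) = ENNReal.ofReal α ^ (2:ℕ) := ENNReal.ofReal_pow hα0 2
        _ = ENNReal.ofReal α ^ (2:ℝ) := (ENNReal.rpow_natCast _ 2).symm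
        _ ≤ _ := step2
    exact (ENNReal.ofReal_le_ofReal_iff (hcost_nn ν hνlt)).1 step3
  refine ⟨part1, ?_, ?_⟩
  · rw [value]
    exact ciInf_le hbdd ⟨μ, hadm⟩
  · have hne : Nonempty {ν : Fin N → ℝ → ℝ // ∀ i, Measurable (ν i) ∧ ∀ x, ν i x ∈ Iio 1} :=
      ⟨⟨fun _ _ => 0, fun i => ⟨measurable_const, fun x => by norm_num [mem_Iio]⟩⟩⟩
    rw [value]
    exact le_ciInf fun ν => part3 ν.1 ν.2
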